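/- Under the standardized i.i.d. setup, E(D_k) = E(B₁ + B₂ + B₃ - 2B₄) = (p n(n-1))⁻¹ Σ_{j=1}^p Var(Y₁ X_{1j}). -/

import Mathlib

open MeasureTheory ProbabilityTheory Finset

/-- Expectation of the high-dimensional influence measure under the
standardized i.i.d. setup:
`E(D_k) = (p n (n-1))⁻¹ ∑_j Var(Y₁ X_{1j})`. -/
theorem expectation_of_him
    {Ω : Type*} [MeasurableSpace Ω] (μ : Measure Ω) [IsProbabilityMeasure μ]
    (n p : ℕ) (hn : 3 ≤ n) (hp : 1 ≤ p) (k i₀ : Fin n) (hi₀ : (i₀ : ℕ) = 0)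
    (X : Fin n → Ω → Fin p → ℝ) (Y : Fin n → Ω → ℝ)
    (hmeas : ∀ i, Measurable (fun ω => (X i ω, Y i ω)))
    (hindep : iIndepFun (fun i ω => (X i ω, Y i ω)) μ)
    (hident : ∀ i, IdentDistrib (fun ω => (X i ω, Y i ω))
      (fun ω => (X i₀ ω, Y i₀ ω)) μ μ)
    (hX4 : ∀ i j, MemLp (fun ω => X i ω j) 4 μ)
    (hY4 : ∀ i, MemLp (Y i) 4 μ)
    (hXmean : ∀ j, ∫ ω, X i₀ ω j ∂μ = 0) (hYmean : ∫ ω, Y i₀ ω ∂μ = 0)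
    -- the influence measure D_k built from leave-one-out marginal correlations
    (ρhat : Fin p → Ω → ℝ)
    (hρ : ∀ j ω, ρhat j ω = (1 / (n : ℝ)) * ∑ i, X i ω j * Y i ω)
    (ρhatk : Fin p → Ω → ℝ)
    (hρk : ∀ j ω, ρhatk j ω
      = (1 / ((n : ℝ) - 1)) * ∑ i ∈ univ.erase k, X i ω j * Y i ω)
    (D : Ω → ℝ)
    (hD : ∀ ω, D ω = (1 / (p : ℝ)) * ∑ j, (ρhat j ω - ρhatk j ω) ^ 2) :
    ∫ ω, D ω ∂μ = (1 / ((p : ℝ) * (n : ℝ) * ((n : ℝ) - 1))) *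
      ∑ j, (∫ ω, (Y i₀ ω * X i₀ ω j) ^ 2 ∂μ - (∫ ω, Y i₀ ω * X i₀ ω j ∂μ) ^ 2) := by
  have hn3 : (3 : ℝ) ≤ (n : ℝ) := by exact_mod_cast hn
  have hnne : (n : ℝ) ≠ 0 := by linarith
  have hn1ne : (n : ℝ) - 1 ≠ 0 := by linarith
  have hpne : (p : ℝ) ≠ 0 := Nat.cast_ne_zero.mpr (by omega)
  set S : Finset (Fin n) := Finset.univ.erase k with hS
  have hScardN : S.card = n - 1 := by
    rw [hS, Finset.card_erase_of_mem (Finset.mem_univ k), Finset.card_univ, Fintype.card_fin]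
  have hScard : (S.card : ℝ) = (n : ℝ) - 1 := by
    rw [hScardN, Nat.cast_sub (by omega)]; norm_num
  set Z : Fin n → Fin p → Ω → ℝ := fun i j ω => X i ω j * Y i ω with hZdef
  have hφm : ∀ j : Fin p, Measurable (fun q : (Fin p → ℝ) × ℝ => q.1 j * q.2) :=
    fun j => ((measurable_pi_apply j).comp measurable_fst).mul measurable_snd
  have hZ2 : ∀ i j, MemLp (Z i j) 2 μ := by
    intro i j
    have h := (hY4 i).smul (hX4 i j) (p := 4) (q := 4) (r := 2)
      (hpqr := ⟨by rw [show (4 : ENNReal) = 2 * 2 by norm_num, ENNReal.mul_inv (by simp) (by simp),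
        ← add_mul, ENNReal.inv_two_add_inv_two, one_mul]⟩)
    simpa [hZdef, Pi.smul_apply', smul_eq_mul, Pi.mul_def] using h
  have hZint : ∀ i j, Integrable (Z i j) μ := fun i j => (hZ2 i j).integrable (by norm_num)
  have hZsq : ∀ i j, Integrable (fun ω => Z i j ω ^ 2) μ := fun i j => (hZ2 i j).integrable_sq
  have hZmul : ∀ i l j, Integrable (fun ω => Z i j ω * Z l j ω) μ := by
    intro i l j
    have h := (hZ2 l j).smul (hZ2 i j) (p := 2) (q := 2) (r := 1)
      (hpqr := ⟨by rw [ENNReal.inv_two_add_inv_two, inv_one]⟩)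
    exact memLp_one_iff_integrable.mp (by simpa [Pi.smul_apply', smul_eq_mul, Pi.mul_def] using h)
  set m : Fin p → ℝ := fun j => ∫ ω, Z i₀ j ω ∂μ with hm
  set Msq : Fin p → ℝ := fun j => ∫ ω, Z i₀ j ω ^ 2 ∂μ with hMsq
  have hident' : ∀ i j, IdentDistrib (Z i j) (Z i₀ j) μ μ := fun i j =>
    (hident i).comp (hφm j)
  have hEZ : ∀ i j, ∫ ω, Z i j ω ∂μ = m j := fun i j => (hident' i j).integral_eq
  have hEZsq : ∀ i j, ∫ ω, Z i j ω ^ 2 ∂μ = Msq j := by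
    intro i j
    exact ((hident i).comp ((hφm j).pow_const 2)).integral_eq
  have hindepZ : ∀ i l j, i ≠ l → IndepFun (Z i j) (Z l j) μ := fun i l j hil =>
    (hindep.indepFun hil).comp (hφm j) (hφm j)
  have hcross : ∀ i l j, i ≠ l → ∫ ω, Z i j ω * Z l j ω ∂μ = m j * m j := by
    intro i l j hil
    rw [show ∫ ω, Z i j ω * Z l j ω ∂μ = ∫ ω, (Z i j * Z l j) ω ∂μ from rfl,
      (hindepZ i l j hil).integral_mul_eq_mul_integral (hZint i j).aestronglyMeasurable
      (hZint l j).aestronglyMeasurable, hEZ, hEZ]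
  -- constants
  set a : ℝ := 1 / (n : ℝ) with ha
  set c : ℝ := 1 / (n : ℝ) - 1 / ((n : ℝ) - 1) with hc
  -- pointwise expansion of the squared difference
  have hpt : ∀ (j : Fin p) (ω : Ω), (ρhat j ω - ρhatk j ω) ^ 2 =
      a ^ 2 * Z k j ω ^ 2 + (∑ i ∈ S, 2 * a * c * (Z k j ω * Z i j ω))
        + ∑ i ∈ S, ∑ l ∈ S, c ^ 2 * (Z i j ω * Z l j ω) := by
    intro j ω
    have hsplit : ∑ i, X i ω j * Y i ω = Z k j ω + ∑ i ∈ S, Z i j ω :=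
      (Finset.add_sum_erase Finset.univ (fun i => X i ω j * Y i ω)
        (Finset.mem_univ k)).symm
    have h1 : ∑ i ∈ S, 2 * a * c * (Z k j ω * Z i j ω)
        = 2 * a * c * (Z k j ω * ∑ i ∈ S, Z i j ω) := by
      rw [Finset.mul_sum, Finset.mul_sum]
    have h2 : ∑ i ∈ S, ∑ l ∈ S, c ^ 2 * (Z i j ω * Z l j ω)
        = c ^ 2 * ((∑ i ∈ S, Z i j ω) * (∑ l ∈ S, Z l j ω)) := by
      rw [Finset.sum_mul_sum, Finset.mul_sum]
      exact Finset.sum_congr rfl fun i _ => by rw [Finset.mul_sum]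
    rw [hρ, hρk, hsplit, h1, h2, ha, hc]
    ring
  -- integrability of the three pieces
  have hT1 : ∀ j, Integrable (fun ω => a ^ 2 * Z k j ω ^ 2) μ :=
    fun j => (hZsq k j).const_mul _
  have hT2 : ∀ j, Integrable (fun ω => ∑ i ∈ S, 2 * a * c * (Z k j ω * Z i j ω)) μ :=
    fun j => integrable_finset_sum S fun i _ => (hZmul k i j).const_mul _
  have hT3 : ∀ j, Integrable
      (fun ω => ∑ i ∈ S, ∑ l ∈ S, c ^ 2 * (Z i j ω * Z l j ω)) μ :=
    fun j => integrable_finset_sum S fun i _ =>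
      integrable_finset_sum S fun l _ => (hZmul i l j).const_mul _
  have hDiffInt : ∀ j, Integrable (fun ω => (ρhat j ω - ρhatk j ω) ^ 2) μ := by
    intro j
    have : (fun ω => (ρhat j ω - ρhatk j ω) ^ 2)
        = fun ω => (a ^ 2 * Z k j ω ^ 2 + ∑ i ∈ S, 2 * a * c * (Z k j ω * Z i j ω))
          + ∑ i ∈ S, ∑ l ∈ S, c ^ 2 * (Z i j ω * Z l j ω) := by
      funext ω; rw [hpt j ω]
    rw [this]
    exact ((hT1 j).add (hT2 j)).add (hT3 j)
  -- expectation of each squared difference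
  have hEdiff : ∀ j, ∫ ω, (ρhat j ω - ρhatk j ω) ^ 2 ∂μ
      = (1 / ((n : ℝ) * ((n : ℝ) - 1))) * (Msq j - m j ^ 2) := by
    intro j
    have hrw : (fun ω => (ρhat j ω - ρhatk j ω) ^ 2)
        = fun ω => (a ^ 2 * Z k j ω ^ 2 + ∑ i ∈ S, 2 * a * c * (Z k j ω * Z i j ω))
          + ∑ i ∈ S, ∑ l ∈ S, c ^ 2 * (Z i j ω * Z l j ω) := by
      funext ω; rw [hpt j ω]
    have step1 : ∫ ω, ((a ^ 2 * Z k j ω ^ 2 + ∑ i ∈ S, 2 * a * c * (Z k j ω * Z i j ω))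
          + ∑ i ∈ S, ∑ l ∈ S, c ^ 2 * (Z i j ω * Z l j ω)) ∂μ
        = (∫ ω, (a ^ 2 * Z k j ω ^ 2 + ∑ i ∈ S, 2 * a * c * (Z k j ω * Z i j ω)) ∂μ)
          + ∫ ω, ∑ i ∈ S, ∑ l ∈ S, c ^ 2 * (Z i j ω * Z l j ω) ∂μ :=
      integral_add ((hT1 j).add (hT2 j)) (hT3 j)
    have step2 : ∫ ω, (a ^ 2 * Z k j ω ^ 2 + ∑ i ∈ S, 2 * a * c * (Z k j ω * Z i j ω)) ∂μ
        = (∫ ω, a ^ 2 * Z k j ω ^ 2 ∂μ)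
          + ∫ ω, ∑ i ∈ S, 2 * a * c * (Z k j ω * Z i j ω) ∂μ :=
      integral_add (hT1 j) (hT2 j)
    rw [hrw, step1, step2, integral_const_mul,
      integral_finset_sum S (fun i _ => (hZmul k i j).const_mul _),
      integral_finset_sum S (fun i _ => integrable_finset_sum S fun l _ =>
        (hZmul i l j).const_mul _)]
    have e1 : ∑ i ∈ S, ∫ ω, 2 * a * c * (Z k j ω * Z i j ω) ∂μ
        = ((n : ℝ) - 1) * (2 * a * c * (m j * m j)) := by
      rw [Finset.sum_congr rfl (fun i hi => by
        rw [integral_const_mul, hcross k i j (by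
          intro h; exact (Finset.ne_of_mem_erase hi) h.symm)]),
        Finset.sum_const, nsmul_eq_mul, hScard]
    have e2 : ∑ i ∈ S, ∫ ω, ∑ l ∈ S, c ^ 2 * (Z i j ω * Z l j ω) ∂μ
        = ((n : ℝ) - 1) * (c ^ 2 * (Msq j + ((n : ℝ) - 2) * (m j * m j))) := by
      have inner : ∀ i ∈ S, ∫ ω, ∑ l ∈ S, c ^ 2 * (Z i j ω * Z l j ω) ∂μ
          = c ^ 2 * (Msq j + ((n : ℝ) - 2) * (m j * m j)) := by
        intro i hi
        rw [integral_finset_sum S (fun l _ => (hZmul i l j).const_mul _)]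
        have hsplit : ∑ l ∈ S, ∫ ω, c ^ 2 * (Z i j ω * Z l j ω) ∂μ
            = (∫ ω, c ^ 2 * (Z i j ω * Z i j ω) ∂μ)
              + ∑ l ∈ S.erase i, ∫ ω, c ^ 2 * (Z i j ω * Z l j ω) ∂μ :=
          (Finset.add_sum_erase S _ hi).symm
        rw [hsplit]
        have hdiag : ∫ ω, c ^ 2 * (Z i j ω * Z i j ω) ∂μ = c ^ 2 * Msq j := by
          rw [show (fun ω => c ^ 2 * (Z i j ω * Z i j ω))
              = fun ω => c ^ 2 * (Z i j ω ^ 2) from funext fun ω => by ring,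
            integral_const_mul, hEZsq]
        have hoff : ∑ l ∈ S.erase i, ∫ ω, c ^ 2 * (Z i j ω * Z l j ω) ∂μ
            = ((n : ℝ) - 2) * (c ^ 2 * (m j * m j)) := by
          rw [Finset.sum_congr rfl (fun l hl => by
            rw [integral_const_mul, hcross i l j
              (Ne.symm (Finset.ne_of_mem_erase hl))]),
            Finset.sum_const, nsmul_eq_mul]
          have : ((S.erase i).card : ℝ) = (n : ℝ) - 2 := by
            rw [Finset.card_erase_of_mem hi, hScardN, Nat.cast_sub (by omega),
              Nat.cast_sub (by omega)]
            push_cast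
            ring
          rw [this]
        rw [hdiag, hoff]; ring
      rw [Finset.sum_congr rfl inner, Finset.sum_const, nsmul_eq_mul, hScard]
    rw [e1, e2, hEZsq k j, ha, hc]
    field_simp
    ring
  -- put everything together
  have hDint : ∫ ω, D ω ∂μ
      = (1 / (p : ℝ)) * ∑ j, ∫ ω, (ρhat j ω - ρhatk j ω) ^ 2 ∂μ := by
    rw [show (fun ω => D ω) = fun ω => (1 / (p : ℝ))
        * ∑ j, (ρhat j ω - ρhatk j ω) ^ 2 from funext fun ω => hD ω,
      integral_const_mul, integral_finset_sum Finset.univ fun j _ => hDiffInt j]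
  have hRHSj : ∀ j : Fin p,
      ∫ ω, (Y i₀ ω * X i₀ ω j) ^ 2 ∂μ - (∫ ω, Y i₀ ω * X i₀ ω j ∂μ) ^ 2
        = Msq j - m j ^ 2 := by
    intro j
    have h1 : (fun ω => (Y i₀ ω * X i₀ ω j) ^ 2) = fun ω => Z i₀ j ω ^ 2 :=
      funext fun ω => by rw [hZdef]; ring
    have h2 : (fun ω => Y i₀ ω * X i₀ ω j) = fun ω => Z i₀ j ω :=
      funext fun ω => by rw [hZdef]; ring
    rw [h1, h2, hMsq, hm]
  rw [hDint, Finset.sum_congr rfl fun j _ => hEdiff j,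
    Finset.sum_congr rfl fun j _ => hRHSj j, ← Finset.mul_sum, ← mul_assoc]
  congr 1
  field_simp
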